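/- arXiv:1208.1781 — 4 statements merged into one kernel-verified Lean document; each statement's English description precedes it below -/
import Mathlib

section
/- Let M be a symmetric positive definite n×n real matrix and G a symmetric positive semi-definite n×n real matrix. For any vector x in the range of M⁻¹G, one has ⟨Mx, x⟩ = max over nonzero y in the range of G of ⟨y, x⟩² / ⟨M⁻¹y, y⟩. -/
open Matrix

lemma cs_posdef {n : ℕ} {A : Matrix (Fin n) (Fin n) ℝ} (hA : A.PosDef)
    (u v : Fin n → ℝ) :
    (u ⬝ᵥ (A *ᵥ v)) ^ 2 ≤ (u ⬝ᵥ (A *ᵥ u)) * (v ⬝ᵥ (A *ᵥ v)) := by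
  have hsym : v ⬝ᵥ (A *ᵥ u) = u ⬝ᵥ (A *ᵥ v) := by
    have hAs : Aᵀ = A := hA.isHermitian.eq
    rw [Matrix.dotProduct_mulVec, ← Matrix.mulVec_transpose, hAs, dotProduct_comm]
  by_cases hv : v = 0
  · simp [hv]
  · have ha : 0 < v ⬝ᵥ (A *ᵥ v) := by simpa using hA.re_dotProduct_pos hv
    set a := v ⬝ᵥ (A *ᵥ v) with haa
    set b := u ⬝ᵥ (A *ᵥ v) with hbb
    set c := u ⬝ᵥ (A *ᵥ u) with hcc
    have h0 : 0 ≤ (a • u - b • v) ⬝ᵥ (A *ᵥ (a • u - b • v)) := by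
      by_cases h : a • u - b • v = 0
      · simp [h]
      · exact le_of_lt (by simpa using hA.re_dotProduct_pos h)
    have hexp : (a • u - b • v) ⬝ᵥ (A *ᵥ (a • u - b • v))
        = a * (a * c) - a * (b * b) - (b * (a * (v ⬝ᵥ (A *ᵥ u))) - b * (b * a)) := by
      rw [Matrix.mulVec_sub, Matrix.mulVec_smul, Matrix.mulVec_smul,
        sub_dotProduct, smul_dotProduct, smul_dotProduct,
        dotProduct_sub, dotProduct_sub, dotProduct_smul, dotProduct_smul,
        dotProduct_smul, dotProduct_smul]
      simp [smul_eq_mul]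
      ring
    rw [hexp, hsym] at h0
    nlinarith [sq_nonneg b]

lemma dp_pos {n : ℕ} {A : Matrix (Fin n) (Fin n) ℝ} (hA : A.PosDef)
    {v : Fin n → ℝ} (hv : v ≠ 0) : 0 < v ⬝ᵥ (A *ᵥ v) := by
  simpa using hA.re_dotProduct_pos hv

/-- Lemma 5.7 of the paper: for `M` SPD and `G` symmetric PSD (nonzero),
for any `x` in the range of `M⁻¹G`,
`⟨Mx, x⟩` is the maximum over nonzero `y` in the range of `G`
of `⟨y, x⟩² / ⟨M⁻¹y, y⟩`. -/
theorem stmt_1 (n : ℕ) (M G : Matrix (Fin n) (Fin n) ℝ)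
    (hM : M.PosDef) (hG : G.PosSemidef) (hGne : G ≠ 0)
    (x : Fin n → ℝ) (hx : ∃ z, x = M⁻¹ *ᵥ (G *ᵥ z)) :
    IsGreatest
      {r : ℝ | ∃ y, (∃ z, y = G *ᵥ z) ∧ y ≠ 0 ∧
        r = (y ⬝ᵥ x) ^ 2 / ((M⁻¹ *ᵥ y) ⬝ᵥ y)}
      ((M *ᵥ x) ⬝ᵥ x) := by
  have hMdet : IsUnit M.det := isUnit_iff_ne_zero.mpr hM.det_pos.ne'
  have hMM : M * M⁻¹ = 1 := mul_nonsing_inv M hMdet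
  have hMinv : (M⁻¹).PosDef := hM.inv
  have hMsymm : Mᵀ = M := hM.isHermitian.eq
  -- key identity: M *ᵥ (M⁻¹ *ᵥ y) = y
  have hcancel : ∀ y : Fin n → ℝ, M *ᵥ (M⁻¹ *ᵥ y) = y := by
    intro y; rw [mulVec_mulVec, hMM, one_mulVec]
  -- key identity: (M⁻¹ *ᵥ y) ⬝ᵥ (M *ᵥ w) = y ⬝ᵥ w
  have hdp : ∀ y w : Fin n → ℝ, (M⁻¹ *ᵥ y) ⬝ᵥ (M *ᵥ w) = y ⬝ᵥ w := by
    intro y w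
    rw [dotProduct_mulVec, ← mulVec_transpose, hMsymm, hcancel]
  constructor
  · -- membership
    by_cases hx0 : x = 0
    · -- value is 0; pick any nonzero y in range of G
      have : ∃ z, G *ᵥ z ≠ 0 := by
        by_contra h
        push_neg at h
        apply hGne
        ext i j
        have := congrFun (h (Pi.single j 1)) i
        simpa [mulVec_single] using this
      obtain ⟨z, hz⟩ := this
      exact ⟨G *ᵥ z, ⟨z, rfl⟩, hz, by simp [hx0]⟩
    · obtain ⟨z, hz⟩ := hx
      refine ⟨M *ᵥ x, ⟨z, by rw [hz, hcancel]⟩, ?_, ?_⟩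
      · intro h
        have h1 : M⁻¹ *ᵥ (M *ᵥ x) = x := by
          rw [mulVec_mulVec, nonsing_inv_mul M hMdet, one_mulVec]
        rw [h, mulVec_zero] at h1
        exact hx0 h1.symm
      · have h1 : M⁻¹ *ᵥ (M *ᵥ x) = x := by
          rw [mulVec_mulVec, nonsing_inv_mul M hMdet, one_mulVec]
        have hpos : 0 < x ⬝ᵥ (M *ᵥ x) := dp_pos hM hx0
        have hc : (M *ᵥ x) ⬝ᵥ x = x ⬝ᵥ (M *ᵥ x) := dotProduct_comm _ _
        rw [h1, hc]
        field_simp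
  · -- upper bound
    rintro r ⟨y, ⟨z, hyz⟩, hy0, rfl⟩
    have hCS := cs_posdef hM (M⁻¹ *ᵥ y) x
    rw [hdp] at hCS
    have hCS2 : (y ⬝ᵥ x) ^ 2 ≤ ((M⁻¹ *ᵥ y) ⬝ᵥ y) * (x ⬝ᵥ (M *ᵥ x)) := by
      have := hdp y y
      calc (y ⬝ᵥ x) ^ 2 ≤ ((M⁻¹ *ᵥ y) ⬝ᵥ (M *ᵥ (M⁻¹ *ᵥ y))) * (x ⬝ᵥ (M *ᵥ x)) := hCS
        _ = ((M⁻¹ *ᵥ y) ⬝ᵥ y) * (x ⬝ᵥ (M *ᵥ x)) := by rw [hcancel]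
    have hdenpos : 0 < (M⁻¹ *ᵥ y) ⬝ᵥ y := by
      have := dp_pos hMinv hy0
      rwa [dotProduct_comm] at this
    rw [div_le_iff₀ hdenpos]
    calc (y ⬝ᵥ x) ^ 2 ≤ ((M⁻¹ *ᵥ y) ⬝ᵥ y) * (x ⬝ᵥ (M *ᵥ x)) := hCS2
      _ = (M *ᵥ x) ⬝ᵥ x * ((M⁻¹ *ᵥ y) ⬝ᵥ y) := by rw [dotProduct_comm x]; ring
end

section
/- Let A be a symmetric positive definite n×n real matrix and B an m×n real matrix. Suppose there is β > 0 such that for every q in the orthogonal complement of ker(B^T), sup_{w ≠ 0} ⟨q, Bw⟩²/⟨w, Aw⟩ ≥ β² ⟨q, Zq⟩, where Z is a symmetric positive definite m×m matrix. If (u, p) solves Au + B^T p = f, Bu = g, with g in the range of B, then ‖u‖_A ≤ ‖f‖_{A⁻¹} + (1/β)‖g‖_{Z⁻¹}, where ‖v‖_A = ⟨v,Av⟩^{1/2}, ‖f‖_{A⁻¹} = ⟨f, A⁻¹f⟩^{1/2}, and ‖g‖_{Z⁻¹} = ⟨g, Z⁻¹g⟩^{1/2}. -/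
open Matrix

private lemma dot_tmul {m n : ℕ} (B : Matrix (Fin m) (Fin n) ℝ) (x : Fin n → ℝ) (q : Fin m → ℝ) :
    x ⬝ᵥ (Bᵀ *ᵥ q) = (B *ᵥ x) ⬝ᵥ q := by
  rw [Matrix.dotProduct_mulVec, Matrix.vecMul_transpose]

private lemma dot_symm {k : ℕ} {M : Matrix (Fin k) (Fin k) ℝ} (hM : Mᵀ = M)
    (x y : Fin k → ℝ) : x ⬝ᵥ (M *ᵥ y) = y ⬝ᵥ (M *ᵥ x) := by
  rw [Matrix.dotProduct_mulVec, ← Matrix.mulVec_transpose, hM, dotProduct_comm]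

private lemma psd_nonneg {k : ℕ} {M : Matrix (Fin k) (Fin k) ℝ} (hM : M.PosSemidef)
    (x : Fin k → ℝ) : 0 ≤ x ⬝ᵥ (M *ᵥ x) := by
  simpa using hM.dotProduct_mulVec_nonneg x

private lemma herm_tr {k : ℕ} {M : Matrix (Fin k) (Fin k) ℝ} (hM : M.IsHermitian) : Mᵀ = M :=
  (Matrix.conjTranspose_eq_transpose_of_trivial M).symm.trans hM

private lemma cs {k : ℕ} {M : Matrix (Fin k) (Fin k) ℝ} (hM : M.PosSemidef)
    (x y : Fin k → ℝ) : (x ⬝ᵥ (M *ᵥ y)) ^ 2 ≤ (x ⬝ᵥ (M *ᵥ x)) * (y ⬝ᵥ (M *ᵥ y)) := by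
  have hMt : Mᵀ = M := herm_tr hM.1
  have hyx : y ⬝ᵥ (M *ᵥ x) = x ⬝ᵥ (M *ᵥ y) := dot_symm hMt y x
  have key : discrim (x ⬝ᵥ (M *ᵥ x)) (2 * (x ⬝ᵥ (M *ᵥ y))) (y ⬝ᵥ (M *ᵥ y)) ≤ 0 := by
    apply discrim_le_zero
    intro t
    have h := psd_nonneg hM (y + t • x)
    have hexp : (y + t • x) ⬝ᵥ (M *ᵥ (y + t • x))
        = (x ⬝ᵥ (M *ᵥ x)) * (t * t) + 2 * (x ⬝ᵥ (M *ᵥ y)) * t + y ⬝ᵥ (M *ᵥ y) := by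
      simp only [Matrix.mulVec_add, Matrix.mulVec_smul, dotProduct_add, add_dotProduct,
        dotProduct_smul, smul_dotProduct, smul_eq_mul, hyx]
      ring
    rw [hexp] at h
    linarith
  rw [discrim] at key
  nlinarith [key]

private lemma cs_sqrt {k : ℕ} {M : Matrix (Fin k) (Fin k) ℝ} (hM : M.PosSemidef)
    (x y : Fin k → ℝ) :
    x ⬝ᵥ (M *ᵥ y) ≤ Real.sqrt (x ⬝ᵥ (M *ᵥ x)) * Real.sqrt (y ⬝ᵥ (M *ᵥ y)) := by
  have h := cs hM x y
  have h1 := psd_nonneg hM x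
  have h2 := psd_nonneg hM y
  have hst : 0 ≤ Real.sqrt (x ⬝ᵥ (M *ᵥ x)) * Real.sqrt (y ⬝ᵥ (M *ᵥ y)) :=
    mul_nonneg (Real.sqrt_nonneg _) (Real.sqrt_nonneg _)
  nlinarith [Real.sq_sqrt h1, Real.sq_sqrt h2, Real.sqrt_nonneg (x ⬝ᵥ (M *ᵥ x)),
    Real.sqrt_nonneg (y ⬝ᵥ (M *ᵥ y)), sq_nonneg (Real.sqrt (x ⬝ᵥ (M *ᵥ x)) * Real.sqrt (y ⬝ᵥ (M *ᵥ y)) - x ⬝ᵥ (M *ᵥ y)),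
    sq_nonneg (Real.sqrt (x ⬝ᵥ (M *ᵥ x)) * Real.sqrt (y ⬝ᵥ (M *ᵥ y)) + x ⬝ᵥ (M *ᵥ y))]

private lemma range_factor {k l : ℕ} (M : Matrix (Fin k) (Fin l) ℝ) (N : Matrix (Fin l) (Fin k) ℝ)
    (hrank : (M * N).rank = M.rank) :
    LinearMap.range (M * N).mulVecLin = LinearMap.range M.mulVecLin := by
  have hle : LinearMap.range (M * N).mulVecLin ≤ LinearMap.range M.mulVecLin := by
    rw [Matrix.mulVecLin_mul]
    exact LinearMap.range_comp_le_range _ _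
  exact Submodule.eq_of_le_of_finrank_eq hle hrank

private lemma helper_div {t c : ℝ} (ht : 0 ≤ t) (hc : 0 ≤ c) (h : t * t ≤ t * c) : t ≤ c := by
  rcases ht.eq_or_lt' with h0 | h0
  · rw [h0]; exact hc
  · exact le_of_mul_le_mul_left h h0
/-- Lemma 5.5 of the paper: stability estimate for the velocity component of
the saddle point problem `Au + Bᵀp = f`, `Bu = g` in terms of the inf-sup
constant `β`: `‖u‖_A ≤ ‖f‖_{A⁻¹} + (1/β)‖g‖_{Z⁻¹}`. -/
theorem stmt_7 (n m : ℕ) (A : Matrix (Fin n) (Fin n) ℝ)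
    (B : Matrix (Fin m) (Fin n) ℝ) (Z : Matrix (Fin m) (Fin m) ℝ)
    (hA : A.PosDef) (hZ : Z.PosDef) (β : ℝ) (hβ : 0 < β)
    (hinfsup : ∀ q : Fin m → ℝ,
      (∀ q' : Fin m → ℝ, Bᵀ *ᵥ q' = 0 → q ⬝ᵥ q' = 0) →
      β ^ 2 * (q ⬝ᵥ (Z *ᵥ q)) ≤
        sSup {r : ℝ | ∃ w : Fin n → ℝ, w ≠ 0 ∧
          r = (q ⬝ᵥ (B *ᵥ w)) ^ 2 / (w ⬝ᵥ (A *ᵥ w))})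
    (u : Fin n → ℝ) (p : Fin m → ℝ) (f : Fin n → ℝ) (g : Fin m → ℝ)
    (heq1 : A *ᵥ u + Bᵀ *ᵥ p = f) (heq2 : B *ᵥ u = g)
    (hg : ∃ w, g = B *ᵥ w) :
    Real.sqrt (u ⬝ᵥ (A *ᵥ u)) ≤
      Real.sqrt (f ⬝ᵥ (A⁻¹ *ᵥ f)) + (1 / β) * Real.sqrt (g ⬝ᵥ (Z⁻¹ *ᵥ g)) := by
  obtain ⟨w, hw⟩ := hg
  have hAinv : (A⁻¹).PosDef := hA.inv
  have hdetA : IsUnit A.det := isUnit_iff_ne_zero.2 hA.det_pos.ne'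
  have hdetZ : IsUnit Z.det := isUnit_iff_ne_zero.2 hZ.det_pos.ne'
  have hAt : Aᵀ = A := herm_tr hA.1
  have hAit : (A⁻¹)ᵀ = A⁻¹ := herm_tr hAinv.1
  have hSt : (B * A⁻¹ * Bᵀ)ᵀ = B * A⁻¹ * Bᵀ := by
    rw [Matrix.transpose_mul, Matrix.transpose_mul, Matrix.transpose_transpose, hAit,
      Matrix.mul_assoc]
  -- construct `q` with `S q = g`, `q ⊥ ker Bᵀ`, where `S = B A⁻¹ Bᵀ`
  open scoped MatrixOrder in
  obtain ⟨q, hSq, hqperp⟩ : ∃ q : Fin m → ℝ, (B * A⁻¹ * Bᵀ) *ᵥ q = g ∧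
      ∀ q' : Fin m → ℝ, Bᵀ *ᵥ q' = 0 → q ⬝ᵥ q' = 0 := by
    have hRR : (CFC.sqrt A⁻¹) * (CFC.sqrt A⁻¹) = A⁻¹ :=
      CFC.sqrt_mul_sqrt_self _ hAinv.posSemidef.nonneg
    have hRt : (CFC.sqrt A⁻¹)ᵀ = (CFC.sqrt A⁻¹) :=
      herm_tr (CFC.sqrt_nonneg A⁻¹).posSemidef.1
    have hdetR : IsUnit (CFC.sqrt A⁻¹).det := by
      refine isUnit_iff_ne_zero.2 fun h0 => ?_
      have : (A⁻¹).det = 0 := by rw [← hRR, Matrix.det_mul, h0, mul_zero]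
      exact hAinv.det_pos.ne' this
    have hSfact : B * A⁻¹ * Bᵀ =
        (B * (CFC.sqrt A⁻¹)) * (B * (CFC.sqrt A⁻¹))ᵀ := by
      rw [Matrix.transpose_mul, hRt, ← Matrix.mul_assoc,
        Matrix.mul_assoc B (CFC.sqrt A⁻¹) (CFC.sqrt A⁻¹), hRR]
    have hrankS : (B * A⁻¹ * Bᵀ).rank = B.rank := by
      rw [hSfact, Matrix.rank_self_mul_transpose,
        Matrix.rank_mul_eq_left_of_isUnit_det _ B hdetR]
    have hrangeS : LinearMap.range (B * A⁻¹ * Bᵀ).mulVecLin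
        = LinearMap.range B.mulVecLin := by
      have := range_factor B (A⁻¹ * Bᵀ) (by rw [← Matrix.mul_assoc, hrankS])
      rwa [← Matrix.mul_assoc] at this
    have hrangeS2 : LinearMap.range ((B * A⁻¹ * Bᵀ) * (B * A⁻¹ * Bᵀ)).mulVecLin
        = LinearMap.range (B * A⁻¹ * Bᵀ).mulVecLin := by
      refine range_factor _ _ ?_
      conv_lhs => rw [show (B * A⁻¹ * Bᵀ) * (B * A⁻¹ * Bᵀ)
        = (B * A⁻¹ * Bᵀ) * (B * A⁻¹ * Bᵀ)ᵀ from by rw [hSt]]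
      rw [Matrix.rank_self_mul_transpose]
    obtain ⟨z, hz⟩ : g ∈ LinearMap.range ((B * A⁻¹ * Bᵀ) * (B * A⁻¹ * Bᵀ)).mulVecLin := by
      rw [hrangeS2, hrangeS]
      exact ⟨w, hw.symm⟩
    refine ⟨(B * A⁻¹ * Bᵀ) *ᵥ z, ?_, ?_⟩
    · rw [Matrix.mulVec_mulVec z (B * A⁻¹ * Bᵀ) (B * A⁻¹ * Bᵀ)]
      exact hz
    · intro q' hq'
      have h1 : (B * A⁻¹ * Bᵀ) *ᵥ q' = 0 := by
        rw [← Matrix.mulVec_mulVec q' (B * A⁻¹) Bᵀ, hq', Matrix.mulVec_zero]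
      calc (B * A⁻¹ * Bᵀ) *ᵥ z ⬝ᵥ q'
          = q' ⬝ᵥ ((B * A⁻¹ * Bᵀ) *ᵥ z) := dotProduct_comm _ _
        _ = z ⬝ᵥ ((B * A⁻¹ * Bᵀ) *ᵥ q') := dot_symm hSt q' z
        _ = 0 := by rw [h1, dotProduct_zero]
  -- the decomposition u = u0 + uP
  have hAuP : A *ᵥ (A⁻¹ *ᵥ (Bᵀ *ᵥ q)) = Bᵀ *ᵥ q := by
    rw [Matrix.mulVec_mulVec (Bᵀ *ᵥ q) A A⁻¹, Matrix.mul_nonsing_inv A hdetA,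
      Matrix.one_mulVec]
  set uP : Fin n → ℝ := A⁻¹ *ᵥ (Bᵀ *ᵥ q) with huP
  set u0 : Fin n → ℝ := u - uP with hu0
  have hBuP : B *ᵥ uP = g := by
    rw [huP, Matrix.mulVec_mulVec (Bᵀ *ᵥ q) B A⁻¹, Matrix.mulVec_mulVec q (B * A⁻¹) Bᵀ, hSq]
  have hBu0 : B *ᵥ u0 = 0 := by
    rw [hu0, Matrix.mulVec_sub, heq2, hBuP, sub_self]
  have hcross : u0 ⬝ᵥ (A *ᵥ uP) = 0 := by
    rw [huP, hAuP, dot_tmul, hBu0, zero_dotProduct]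
  have hcross' : uP ⬝ᵥ (A *ᵥ u0) = 0 := by
    rw [dot_symm hAt]; exact hcross
  set a2 : ℝ := u0 ⬝ᵥ (A *ᵥ u0) with ha2
  set b2 : ℝ := uP ⬝ᵥ (A *ᵥ uP) with hb2
  have ha2n : 0 ≤ a2 := psd_nonneg hA.posSemidef u0
  have hb2n : 0 ≤ b2 := psd_nonneg hA.posSemidef uP
  have huu : u = u0 + uP := by rw [hu0]; ring
  have hsplit : u ⬝ᵥ (A *ᵥ u) = a2 + b2 := by
    rw [huu]
    simp only [Matrix.mulVec_add, dotProduct_add, add_dotProduct]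
    rw [← ha2, ← hb2]
    linarith [hcross, hcross']
  -- bound on b2 via inf-sup
  have hb2' : b2 = (Bᵀ *ᵥ q) ⬝ᵥ (A⁻¹ *ᵥ (Bᵀ *ᵥ q)) := by
    rw [hb2, huP, hAuP, dotProduct_comm]
  have hsup : sSup {r : ℝ | ∃ w' : Fin n → ℝ, w' ≠ 0 ∧
      r = (q ⬝ᵥ (B *ᵥ w')) ^ 2 / (w' ⬝ᵥ (A *ᵥ w'))} ≤ b2 := by
    apply Real.sSup_le _ hb2n
    rintro r ⟨w', hw', rfl⟩
    have hAw : 0 < w' ⬝ᵥ (A *ᵥ w') := by simpa using hA.dotProduct_mulVec_pos hw'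
    rw [div_le_iff₀ hAw]
    have h1 : q ⬝ᵥ (B *ᵥ w') = (Bᵀ *ᵥ q) ⬝ᵥ (A⁻¹ *ᵥ (A *ᵥ w')) := by
      rw [Matrix.mulVec_mulVec w' A⁻¹ A, Matrix.nonsing_inv_mul A hdetA, Matrix.one_mulVec,
        dotProduct_comm q (B *ᵥ w'), ← dot_tmul, dotProduct_comm]
    have hcs := cs hAinv.posSemidef (Bᵀ *ᵥ q) (A *ᵥ w')
    have h2 : (A *ᵥ w') ⬝ᵥ (A⁻¹ *ᵥ (A *ᵥ w')) = w' ⬝ᵥ (A *ᵥ w') := by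
      rw [Matrix.mulVec_mulVec w' A⁻¹ A, Matrix.nonsing_inv_mul A hdetA, Matrix.one_mulVec,
        dotProduct_comm]
    rw [h2, ← hb2'] at hcs
    rw [h1]
    exact hcs
  have hqZ : β ^ 2 * (q ⬝ᵥ (Z *ᵥ q)) ≤ b2 := le_trans (hinfsup q hqperp) hsup
  have hqZn : 0 ≤ q ⬝ᵥ (Z *ᵥ q) := psd_nonneg hZ.posSemidef q
  -- b2 = q ⬝ᵥ g and Cauchy-Schwarz w.r.t. Z
  have hqg : b2 = q ⬝ᵥ g := by
    rw [hb2, huP, hAuP, dot_tmul, ← huP, hBuP, dotProduct_comm]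
  have hZinv : Z *ᵥ (Z⁻¹ *ᵥ g) = g := by
    rw [Matrix.mulVec_mulVec g Z Z⁻¹, Matrix.mul_nonsing_inv Z hdetZ, Matrix.one_mulVec]
  have hgq : q ⬝ᵥ g ≤ Real.sqrt (q ⬝ᵥ (Z *ᵥ q)) * Real.sqrt (g ⬝ᵥ (Z⁻¹ *ᵥ g)) := by
    have h := cs_sqrt hZ.posSemidef q (Z⁻¹ *ᵥ g)
    rw [hZinv] at h
    rwa [show (Z⁻¹ *ᵥ g) ⬝ᵥ g = g ⬝ᵥ (Z⁻¹ *ᵥ g) from dotProduct_comm _ _] at h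
  have hsb : Real.sqrt (q ⬝ᵥ (Z *ᵥ q)) ≤ Real.sqrt b2 / β := by
    have h1 : q ⬝ᵥ (Z *ᵥ q) ≤ b2 / β ^ 2 := by
      rw [le_div_iff₀ (by positivity)]
      linarith [hqZ]
    calc Real.sqrt (q ⬝ᵥ (Z *ᵥ q)) ≤ Real.sqrt (b2 / β ^ 2) := Real.sqrt_le_sqrt h1
      _ = Real.sqrt b2 / β := by
          rw [Real.sqrt_div hb2n, Real.sqrt_sq hβ.le]
  have hgZn : 0 ≤ Real.sqrt (g ⬝ᵥ (Z⁻¹ *ᵥ g)) := Real.sqrt_nonneg _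
  have htb : Real.sqrt b2 ≤ (1 / β) * Real.sqrt (g ⬝ᵥ (Z⁻¹ *ᵥ g)) := by
    apply helper_div (Real.sqrt_nonneg b2) (by positivity)
    calc Real.sqrt b2 * Real.sqrt b2 = b2 := Real.mul_self_sqrt hb2n
      _ = q ⬝ᵥ g := hqg
      _ ≤ Real.sqrt (q ⬝ᵥ (Z *ᵥ q)) * Real.sqrt (g ⬝ᵥ (Z⁻¹ *ᵥ g)) := hgq
      _ ≤ (Real.sqrt b2 / β) * Real.sqrt (g ⬝ᵥ (Z⁻¹ *ᵥ g)) :=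
          mul_le_mul_of_nonneg_right hsb hgZn
      _ = Real.sqrt b2 * ((1 / β) * Real.sqrt (g ⬝ᵥ (Z⁻¹ *ᵥ g))) := by ring
  -- bound on a2
  have ha2f : a2 = u0 ⬝ᵥ f := by
    have hAu : A *ᵥ u = f - Bᵀ *ᵥ p := eq_sub_of_add_eq heq1
    have h1 : u0 ⬝ᵥ (A *ᵥ u) = a2 := by
      rw [huu, Matrix.mulVec_add, dotProduct_add, hcross, add_zero, ha2]
    calc a2 = u0 ⬝ᵥ (A *ᵥ u) := h1.symm
      _ = u0 ⬝ᵥ (f - Bᵀ *ᵥ p) := by rw [hAu]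
      _ = u0 ⬝ᵥ f - (B *ᵥ u0) ⬝ᵥ p := by rw [dotProduct_sub, dot_tmul]
      _ = u0 ⬝ᵥ f := by rw [hBu0, zero_dotProduct, sub_zero]
  have hsa : Real.sqrt a2 ≤ Real.sqrt (f ⬝ᵥ (A⁻¹ *ᵥ f)) := by
    apply helper_div (Real.sqrt_nonneg a2) (Real.sqrt_nonneg _)
    have hAf : A *ᵥ (A⁻¹ *ᵥ f) = f := by
      rw [Matrix.mulVec_mulVec f A A⁻¹, Matrix.mul_nonsing_inv A hdetA, Matrix.one_mulVec]
    have h := cs_sqrt hA.posSemidef u0 (A⁻¹ *ᵥ f)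
    rw [hAf] at h
    rw [show (A⁻¹ *ᵥ f) ⬝ᵥ f = f ⬝ᵥ (A⁻¹ *ᵥ f) from dotProduct_comm _ _] at h
    calc Real.sqrt a2 * Real.sqrt a2 = a2 := Real.mul_self_sqrt ha2n
      _ = u0 ⬝ᵥ f := ha2f
      _ ≤ Real.sqrt a2 * Real.sqrt (f ⬝ᵥ (A⁻¹ *ᵥ f)) := by rw [ha2]; exact h
  -- conclude
  have hfinal : Real.sqrt (u ⬝ᵥ (A *ᵥ u)) ≤ Real.sqrt a2 + Real.sqrt b2 := by
    rw [hsplit]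
    have h1 : a2 + b2 ≤ (Real.sqrt a2 + Real.sqrt b2) ^ 2 := by
      have := Real.sq_sqrt ha2n
      have := Real.sq_sqrt hb2n
      nlinarith [mul_nonneg (Real.sqrt_nonneg a2) (Real.sqrt_nonneg b2)]
    calc Real.sqrt (a2 + b2) ≤ Real.sqrt ((Real.sqrt a2 + Real.sqrt b2) ^ 2) :=
        Real.sqrt_le_sqrt h1
      _ = Real.sqrt a2 + Real.sqrt b2 := Real.sqrt_sq (by positivity)
  linarith [hfinal, hsa, htb]
end

section
/- Let A be symmetric positive definite n×n and B an m×n matrix satisfying the inf-sup condition: for all q ⊥ ker(B^T), sup_{w≠0} ⟨q,Bw⟩²/⟨w,Aw⟩ ≥ β²⟨q,Zq⟩ with Z symmetric positive definite and β > 0. Then for every g in the range of B there exists u with Bu = g and ⟨u, Au⟩ ≤ (1/β²)⟨g, Z⁻¹g⟩. -/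
open Matrix

/-- Cauchy–Schwarz for the bilinear form of a positive semidefinite real matrix. -/
lemma psd_cauchy_schwarz {n : ℕ} (A : Matrix (Fin n) (Fin n) ℝ)
    (hA : A.PosSemidef) (hAT : Aᵀ = A) (x y : Fin n → ℝ) :
    (x ⬝ᵥ (A *ᵥ y)) ^ 2 ≤ (x ⬝ᵥ (A *ᵥ x)) * (y ⬝ᵥ (A *ᵥ y)) := by
  have hsym : ∀ a b : Fin n → ℝ, a ⬝ᵥ (A *ᵥ b) = b ⬝ᵥ (A *ᵥ a) := by
    intro a b
    rw [dotProduct_mulVec, ← mulVec_transpose, hAT, dotProduct_comm]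
  have hq : ∀ t : ℝ, 0 ≤ (y ⬝ᵥ (A *ᵥ y)) * (t * t)
      + (2 * (x ⬝ᵥ (A *ᵥ y))) * t + (x ⬝ᵥ (A *ᵥ x)) := by
    intro t
    have h0 : 0 ≤ (x + t • y) ⬝ᵥ (A *ᵥ (x + t • y)) := by
      have := hA.dotProduct_mulVec_nonneg (x + t • y)
      simpa using this
    have hexp : (x + t • y) ⬝ᵥ (A *ᵥ (x + t • y)) =
        (y ⬝ᵥ (A *ᵥ y)) * (t * t) + (2 * (x ⬝ᵥ (A *ᵥ y))) * t + (x ⬝ᵥ (A *ᵥ x)) := by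
      rw [mulVec_add, mulVec_smul, add_dotProduct, smul_dotProduct,
        dotProduct_add, dotProduct_add, dotProduct_smul, dotProduct_smul,
        smul_eq_mul, smul_eq_mul, smul_eq_mul, hsym y x]
      ring
    linarith [hexp ▸ h0]
  have hd := discrim_le_zero hq
  rw [discrim] at hd
  nlinarith [hd]

/-- Consequence of the inf-sup condition (equation 2.4): the divergence
operator `B` admits a bounded right inverse on its range, i.e. for every
`g ∈ Range(B)` there is `u` with `Bu = g` and `⟨u, Au⟩ ≤ (1/β²)⟨g, Z⁻¹g⟩`. -/
theorem stmt_8 (n m : ℕ) (A : Matrix (Fin n) (Fin n) ℝ)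
    (B : Matrix (Fin m) (Fin n) ℝ) (Z : Matrix (Fin m) (Fin m) ℝ)
    (hA : A.PosDef) (hZ : Z.PosDef) (β : ℝ) (hβ : 0 < β)
    (hinfsup : ∀ q : Fin m → ℝ,
      (∀ q' : Fin m → ℝ, Bᵀ *ᵥ q' = 0 → q ⬝ᵥ q' = 0) →
      β ^ 2 * (q ⬝ᵥ (Z *ᵥ q)) ≤
        sSup {r : ℝ | ∃ w : Fin n → ℝ, w ≠ 0 ∧
          r = (q ⬝ᵥ (B *ᵥ w)) ^ 2 / (w ⬝ᵥ (A *ᵥ w))})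
    (g : Fin m → ℝ) (hg : ∃ w, g = B *ᵥ w) :
    ∃ u : Fin n → ℝ, B *ᵥ u = g ∧
      u ⬝ᵥ (A *ᵥ u) ≤ (1 / β ^ 2) * (g ⬝ᵥ (Z⁻¹ *ᵥ g)) := by
  classical
  have hAi : (A⁻¹).PosDef := hA.inv
  have hAT : Aᵀ = A := by
    have := hA.1
    rwa [Matrix.IsHermitian, conjTranspose_eq_transpose_of_trivial] at this
  have hAiT : (A⁻¹)ᵀ = A⁻¹ := by
    rw [Matrix.transpose_nonsing_inv, hAT]
  have hZT : Zᵀ = Z := by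
    have := hZ.1
    rwa [Matrix.IsHermitian, conjTranspose_eq_transpose_of_trivial] at this
  have hZiT : (Z⁻¹)ᵀ = Z⁻¹ := by
    rw [Matrix.transpose_nonsing_inv, hZT]
  have hAinv : A * A⁻¹ = 1 := Matrix.mul_nonsing_inv A hA.det_pos.ne'.isUnit
  set S : Matrix (Fin m) (Fin m) ℝ := B * A⁻¹ * Bᵀ with hSdef
  have hST : Sᵀ = S := by
    rw [hSdef, Matrix.transpose_mul, Matrix.transpose_mul, hAiT, Matrix.transpose_transpose,
      Matrix.mul_assoc]
  -- quadratic form identity : p ⬝ S p = (Bᵀ p) ⬝ A⁻¹ (Bᵀ p)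
  have hquad : ∀ p : Fin m → ℝ,
      p ⬝ᵥ (S *ᵥ p) = (Bᵀ *ᵥ p) ⬝ᵥ (A⁻¹ *ᵥ (Bᵀ *ᵥ p)) := by
    intro p
    rw [hSdef, ← Matrix.mulVec_mulVec, ← Matrix.mulVec_mulVec,
      dotProduct_mulVec, ← mulVec_transpose]
  -- S p = 0 implies Bᵀ p = 0
  have hkerS : ∀ p : Fin m → ℝ, S *ᵥ p = 0 → Bᵀ *ᵥ p = 0 := by
    intro p hp
    by_contra hne
    have hpos := hAi.dotProduct_mulVec_pos hne
    have : p ⬝ᵥ (S *ᵥ p) = 0 := by rw [hp, dotProduct_zero]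
    rw [hquad p] at this
    simp only [star_trivial] at hpos
    linarith
  -- (S * S) p = 0 implies Bᵀ p = 0
  have hkerSS : ∀ p : Fin m → ℝ, (S * S) *ᵥ p = 0 → Bᵀ *ᵥ p = 0 := by
    intro p hp
    apply hkerS
    have h0 : (S *ᵥ p) ⬝ᵥ (S *ᵥ p) = 0 := by
      rw [dotProduct_mulVec, ← mulVec_transpose, hST, Matrix.mulVec_mulVec, hp,
        zero_dotProduct]
    exact dotProduct_self_eq_zero.mp h0
  -- kernels as submodules
  have hkerEq : LinearMap.ker (S * S).mulVecLin = LinearMap.ker Bᵀ.mulVecLin := by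
    ext p
    simp only [LinearMap.mem_ker, Matrix.mulVecLin_apply]
    constructor
    · exact hkerSS p
    · intro hp
      have h1 : S *ᵥ p = 0 := by
        rw [hSdef, ← Matrix.mulVec_mulVec, ← Matrix.mulVec_mulVec, hp]
        simp
      rw [← Matrix.mulVec_mulVec, h1]
      simp
  -- range inclusion
  have hrangele : LinearMap.range (S * S).mulVecLin ≤ LinearMap.range B.mulVecLin := by
    rintro x ⟨p, rfl⟩
    refine ⟨(A⁻¹ * Bᵀ * S) *ᵥ p, ?_⟩
    simp only [Matrix.mulVecLin_apply, Matrix.mulVec_mulVec]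
    rw [hSdef]
    simp only [Matrix.mul_assoc]
  -- finrank equalities via rank-nullity and rank_transpose
  have hfr1 := LinearMap.finrank_range_add_finrank_ker (S * S).mulVecLin
  have hfr2 : Module.finrank ℝ (LinearMap.range Bᵀ.mulVecLin)
      + Module.finrank ℝ (LinearMap.ker Bᵀ.mulVecLin)
      = Module.finrank ℝ (Fin m → ℝ) := LinearMap.finrank_range_add_finrank_ker Bᵀ.mulVecLin
  have hrk : Bᵀ.rank = B.rank := Matrix.rank_transpose B
  have hfle : Module.finrank ℝ (LinearMap.range B.mulVecLin)
      ≤ Module.finrank ℝ (LinearMap.range (S * S).mulVecLin) := by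
    have h1 : Module.finrank ℝ (LinearMap.range (S * S).mulVecLin)
        = Module.finrank ℝ (LinearMap.range Bᵀ.mulVecLin) := by
      have := hfr1
      rw [hkerEq] at this
      omega
    rw [h1]
    have : Module.finrank ℝ (LinearMap.range Bᵀ.mulVecLin) = Bᵀ.rank := rfl
    rw [this, hrk]
    exact le_of_eq rfl
  have hrangeEq : LinearMap.range (S * S).mulVecLin = LinearMap.range B.mulVecLin :=
    Submodule.eq_of_le_of_finrank_le hrangele hfle
  -- obtain p₀ with (S*S) p₀ = g
  obtain ⟨w₀, rfl⟩ := hg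
  have hgmem : B *ᵥ w₀ ∈ LinearMap.range (S * S).mulVecLin := by
    rw [hrangeEq]; exact ⟨w₀, rfl⟩
  obtain ⟨p₀, hp₀⟩ := hgmem
  simp only [Matrix.mulVecLin_apply] at hp₀
  set g : Fin m → ℝ := B *ᵥ w₀ with hgdef
  set p : Fin m → ℝ := S *ᵥ p₀ with hpdef
  have hSp : S *ᵥ p = g := by
    rw [hpdef, Matrix.mulVec_mulVec, hp₀]
  -- p is orthogonal to ker Bᵀ
  have hperp : ∀ q' : Fin m → ℝ, Bᵀ *ᵥ q' = 0 → p ⬝ᵥ q' = 0 := by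
    intro q' hq'
    have hSq' : S *ᵥ q' = 0 := by
      rw [hSdef, ← Matrix.mulVec_mulVec, ← Matrix.mulVec_mulVec, hq']
      simp
    rw [hpdef, dotProduct_comm, dotProduct_mulVec, ← mulVec_transpose, hST, hSq',
      zero_dotProduct]
  -- define u
  set u : Fin n → ℝ := A⁻¹ *ᵥ (Bᵀ *ᵥ p) with hudef
  have hBu : B *ᵥ u = g := by
    rw [hudef, Matrix.mulVec_mulVec, Matrix.mulVec_mulVec, ← hSdef, hSp]
  have hAu : A *ᵥ u = Bᵀ *ᵥ p := by
    rw [hudef, Matrix.mulVec_mulVec, hAinv, Matrix.one_mulVec]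
  -- energy identity : u ⬝ A u = p ⬝ g
  have henergy : u ⬝ᵥ (A *ᵥ u) = p ⬝ᵥ g := by
    rw [hAu, hudef, dotProduct_comm, ← hquad p, hSp]
  have hEnonneg : 0 ≤ u ⬝ᵥ (A *ᵥ u) := by
    have := hA.posSemidef.dotProduct_mulVec_nonneg u
    simpa using this
  -- sup bound : every element of the set is ≤ u ⬝ A u
  have hsup : sSup {r : ℝ | ∃ w : Fin n → ℝ, w ≠ 0 ∧
      r = (p ⬝ᵥ (B *ᵥ w)) ^ 2 / (w ⬝ᵥ (A *ᵥ w))} ≤ u ⬝ᵥ (A *ᵥ u) := by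
    apply Real.sSup_le
    · rintro r ⟨w, hw, rfl⟩
      have hwA : 0 < w ⬝ᵥ (A *ᵥ w) := by
        have := hA.dotProduct_mulVec_pos hw
        simpa using this
      rw [div_le_iff₀ hwA]
      have hpBw : p ⬝ᵥ (B *ᵥ w) = u ⬝ᵥ (A *ᵥ w) := by
        rw [dotProduct_mulVec, ← mulVec_transpose, ← hAu, dotProduct_comm,
          dotProduct_mulVec, ← mulVec_transpose, hAT]
        exact dotProduct_comm _ _
      rw [hpBw]
      exact psd_cauchy_schwarz A hA.posSemidef hAT u w
    · exact hEnonneg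
  -- inf-sup gives β² p⬝Zp ≤ u⬝Au = p⬝g
  have hkey : β ^ 2 * (p ⬝ᵥ (Z *ᵥ p)) ≤ p ⬝ᵥ g := by
    calc β ^ 2 * (p ⬝ᵥ (Z *ᵥ p)) ≤ _ := hinfsup p hperp
    _ ≤ u ⬝ᵥ (A *ᵥ u) := hsup
    _ = p ⬝ᵥ g := henergy
  -- Cauchy-Schwarz in Z : (p⬝g)² ≤ (p⬝Zp)(g⬝Z⁻¹g)
  have hZinv : Z * Z⁻¹ = 1 := Matrix.mul_nonsing_inv Z hZ.det_pos.ne'.isUnit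
  have hcsZ : (p ⬝ᵥ g) ^ 2 ≤ (p ⬝ᵥ (Z *ᵥ p)) * (g ⬝ᵥ (Z⁻¹ *ᵥ g)) := by
    have hgZy : g = Z *ᵥ (Z⁻¹ *ᵥ g) := by
      rw [Matrix.mulVec_mulVec, hZinv, Matrix.one_mulVec]
    have hyy : (Z⁻¹ *ᵥ g) ⬝ᵥ (Z *ᵥ (Z⁻¹ *ᵥ g)) = g ⬝ᵥ (Z⁻¹ *ᵥ g) := by
      rw [← hgZy, dotProduct_comm]
    calc (p ⬝ᵥ g) ^ 2 = (p ⬝ᵥ (Z *ᵥ (Z⁻¹ *ᵥ g))) ^ 2 := by rw [← hgZy]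
    _ ≤ (p ⬝ᵥ (Z *ᵥ p)) * ((Z⁻¹ *ᵥ g) ⬝ᵥ (Z *ᵥ (Z⁻¹ *ᵥ g))) :=
        psd_cauchy_schwarz Z hZ.posSemidef hZT p (Z⁻¹ *ᵥ g)
    _ = (p ⬝ᵥ (Z *ᵥ p)) * (g ⬝ᵥ (Z⁻¹ *ᵥ g)) := by rw [hyy]
  -- combine
  refine ⟨u, hBu, ?_⟩
  rw [henergy]
  have hZp : 0 ≤ p ⬝ᵥ (Z *ᵥ p) := by
    have := hZ.posSemidef.dotProduct_mulVec_nonneg p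
    simpa using this
  have hc : 0 ≤ g ⬝ᵥ (Z⁻¹ *ᵥ g) := by
    have := hZ.posSemidef.inv.dotProduct_mulVec_nonneg g
    simpa using this
  have ht : 0 ≤ p ⬝ᵥ g := henergy ▸ hEnonneg
  set t := p ⬝ᵥ g
  set a := p ⬝ᵥ (Z *ᵥ p)
  set c := g ⬝ᵥ (Z⁻¹ *ᵥ g)
  rcases eq_or_lt_of_le ht with h0 | h0
  · rw [← h0]
    positivity
  · have hβ2 : 0 < β ^ 2 := by positivity
    have h1 : β ^ 2 * t ≤ c := by
      nlinarith [mul_le_mul_of_nonneg_left hcsZ hβ2.le,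
        mul_le_mul_of_nonneg_right hkey hc, h0]
    calc t = (1 / β ^ 2) * (β ^ 2 * t) := by field_simp
    _ ≤ (1 / β ^ 2) * c := by
        apply mul_le_mul_of_nonneg_left h1
        positivity
end

section
/- Let à be symmetric positive definite, B_C an m×n matrix, G = B_C Ã⁻¹ B_C^T, and M symmetric positive definite. Suppose there is c > 0 such that for every y ∈ ℝ^m there exists w ∈ ℝⁿ with B_C w = y and ⟨Ãw, w⟩ ≤ (1/c)⟨M⁻¹y, y⟩. Then ⟨Gx, x⟩ ≥ c⟨Mx, x⟩ for all x ∈ ℝ^m. -/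
open Matrix

/-- Abstract lower bound argument of Theorem 6.3: if for every `y` there is
`w` with `B_C w = y` and `⟨Ãw, w⟩ ≤ (1/c)⟨M⁻¹y, y⟩`, then
`⟨Gx, x⟩ ≥ c ⟨Mx, x⟩` for all `x`, where `G = B_C Ã⁻¹ B_Cᵀ`. -/
theorem stmt_16 (n m : ℕ) (A : Matrix (Fin n) (Fin n) ℝ)
    (B : Matrix (Fin m) (Fin n) ℝ) (M : Matrix (Fin m) (Fin m) ℝ)
    (hA : A.PosDef) (hM : M.PosDef) (c : ℝ) (hc : 0 < c)
    (hlift : ∀ y : Fin m → ℝ, ∃ w : Fin n → ℝ, B *ᵥ w = y ∧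
      (A *ᵥ w) ⬝ᵥ w ≤ (1 / c) * ((M⁻¹ *ᵥ y) ⬝ᵥ y)) :
    ∀ x : Fin m → ℝ,
      c * ((M *ᵥ x) ⬝ᵥ x) ≤ ((B * A⁻¹ * Bᵀ) *ᵥ x) ⬝ᵥ x := by
  intro x
  by_cases hx : x = 0
  · simp [hx]
  obtain ⟨w, hw, hwb⟩ := hlift (M *ᵥ x)
  set u : Fin n → ℝ := A⁻¹ *ᵥ (Bᵀ *ᵥ x) with hu
  have hAinv := hA.isUnit
  have hAu : A *ᵥ u = Bᵀ *ᵥ x := by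
    rw [hu, Matrix.mulVec_mulVec, Matrix.mul_nonsing_inv _ (isUnit_iff_isUnit_det _ |>.1 hAinv), one_mulVec]
  -- G x ⬝ x
  have hG : ((B * A⁻¹ * Bᵀ) *ᵥ x) ⬝ᵥ x = u ⬝ᵥ (A *ᵥ u) := by
    rw [hAu, hu]
    rw [Matrix.mul_assoc, ← Matrix.mulVec_mulVec, ← Matrix.mulVec_mulVec]
    rw [dotProduct_comm, Matrix.dotProduct_mulVec, ← Matrix.mulVec_transpose,
      dotProduct_comm]
  have hinnerwu : (w ⬝ᵥ (A *ᵥ u)) = (M *ᵥ x) ⬝ᵥ x := by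
    rw [hAu, Matrix.dotProduct_mulVec, ← Matrix.mulVec_transpose, Matrix.transpose_transpose, hw]
  have cs : (w ⬝ᵥ (A *ᵥ u)) * (w ⬝ᵥ (A *ᵥ u)) ≤ (w ⬝ᵥ (A *ᵥ w)) * (u ⬝ᵥ (A *ᵥ u)) := by
    have cs0 : ((A *ᵥ u) ⬝ᵥ w) * ((A *ᵥ u) ⬝ᵥ w) ≤ ((A *ᵥ w) ⬝ᵥ w) * ((A *ᵥ u) ⬝ᵥ u) :=
      @real_inner_mul_inner_self_le (Fin n → ℝ) (A.toSeminormedAddCommGroup hA.posSemidef)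
        (A.toInnerProductSpace hA.posSemidef) w u
    rw [dotProduct_comm (A *ᵥ u) w, dotProduct_comm (A *ᵥ w) w, dotProduct_comm (A *ᵥ u) u] at cs0
    exact cs0
  rw [hinnerwu] at cs
  have hMinv : (M⁻¹ *ᵥ (M *ᵥ x)) ⬝ᵥ (M *ᵥ x) = x ⬝ᵥ (M *ᵥ x) := by
    rw [Matrix.mulVec_mulVec, Matrix.nonsing_inv_mul _ (isUnit_iff_isUnit_det _ |>.1 hM.isUnit), one_mulVec]
  have hwb' : w ⬝ᵥ (A *ᵥ w) ≤ (1 / c) * ((M *ᵥ x) ⬝ᵥ x) := by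
    calc w ⬝ᵥ (A *ᵥ w) = (A *ᵥ w) ⬝ᵥ w := dotProduct_comm _ _
      _ ≤ (1 / c) * ((M⁻¹ *ᵥ (M *ᵥ x)) ⬝ᵥ (M *ᵥ x)) := hwb
      _ = (1 / c) * ((M *ᵥ x) ⬝ᵥ x) := by rw [hMinv, dotProduct_comm]
  set t : ℝ := (M *ᵥ x) ⬝ᵥ x with ht
  have htpos : 0 < t := by
    have := hM.dotProduct_mulVec_pos hx
    simpa [ht, dotProduct_comm] using this
  have hg0 : u ⬝ᵥ (A *ᵥ u) ≥ 0 := by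
    by_cases hu0 : u = 0
    · simp [hu0]
    · exact le_of_lt (by simpa using hA.dotProduct_mulVec_pos hu0)
  have key : t * t ≤ (1 / c) * t * (u ⬝ᵥ (A *ᵥ u)) := by
    calc t * t ≤ (w ⬝ᵥ (A *ᵥ w)) * (u ⬝ᵥ (A *ᵥ u)) := cs
      _ ≤ (1 / c) * t * (u ⬝ᵥ (A *ᵥ u)) := by
        apply mul_le_mul_of_nonneg_right hwb' hg0
  rw [hG]
  have := mul_le_mul_of_nonneg_left key (le_of_lt hc)
  have hne : t ≠ 0 := htpos.ne'
  have hcne : c ≠ 0 := hc.ne'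
  calc c * t = (c * (t * t)) / t := by field_simp
    _ ≤ (c * ((1 / c) * t * (u ⬝ᵥ (A *ᵥ u)))) / t :=
        div_le_div_of_nonneg_right this htpos.le
    _ = u ⬝ᵥ (A *ᵥ u) := by field_simp
end
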